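/- Let X be a real Hilbert space, A : X → X a bounded linear accretive operator, α > 0, ρ > 0, x†, x̄ ∈ X, and let M be a map from the closed ball B̄_ρ(x†) = {z ∈ X : ‖z − x†‖ ≤ ρ} into the bounded linear operators on X such that ‖M(z) − I‖ ≤ c for all z ∈ B̄_ρ(x†) with some c ∈ [0,1), ‖M(z) − M(z̃)‖ ≤ L_M ‖z − z̃‖ for all z, z̃ ∈ B̄_ρ(x†), ‖x̄ − x†‖ ≤ (1 − c)ρ, and c + L_M ρ < 1. Then there exists a unique z ∈ B̄_ρ(x†) satisfying (A M(z) + αI)(z − x†) + α(x† − x̄) = 0. -/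

import Mathlib

open RealInnerProductSpace

section Aux

variable {X : Type*} [NormedAddCommGroup X] [InnerProductSpace ℝ X] [CompleteSpace X]

/-- Lower bound for an accretive operator shifted by `α`. -/
lemma aux_low (A : X →L[ℝ] X) (hacc : ∀ x : X, 0 ≤ ⟪A x, x⟫) {α : ℝ} (hα : 0 < α) (x : X) :
    α * ‖x‖ ≤ ‖A x + α • x‖ := by
  rcases eq_or_ne x 0 with rfl | hx
  · simp
  · have hxpos : 0 < ‖x‖ := norm_pos_iff.mpr hx
    have h1 : α * ‖x‖ * ‖x‖ ≤ ⟪A x + α • x, x⟫ := by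
      rw [inner_add_left, real_inner_smul_left, real_inner_self_eq_norm_mul_norm]
      nlinarith [hacc x]
    have h2 : ⟪A x + α • x, x⟫ ≤ ‖A x + α • x‖ * ‖x‖ := real_inner_le_norm _ _
    have := h1.trans h2
    exact (mul_le_mul_iff_of_pos_right hxpos).mp this

lemma aux_A_le (A : X →L[ℝ] X) (hacc : ∀ x : X, 0 ≤ ⟪A x, x⟫) {α : ℝ} (hα : 0 < α) (x : X) :
    ‖A x‖ ≤ ‖A x + α • x‖ := by
  have hsq : ‖A x + α • x‖ ^ 2 = ‖A x‖ ^ 2 + 2 * ⟪A x, α • x⟫ + ‖α • x‖ ^ 2 :=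
    norm_add_sq_real (A x) (α • x)
  have hin : 0 ≤ ⟪A x, α • x⟫ := by
    rw [real_inner_smul_right]
    exact mul_nonneg hα.le (hacc x)
  nlinarith [norm_nonneg (A x), norm_nonneg (A x + α • x), sq_nonneg ‖α • x‖]

end Aux

/-- Existence and uniqueness (via Banach's fixed point theorem) of the intermediate
quantity z in the closed ball B̄_ρ(x†) solving (A M(z) + αI)(z − x†) + α(x† − x̄) = 0. -/
theorem stmt_17 {X : Type*} [NormedAddCommGroup X] [InnerProductSpace ℝ X] [CompleteSpace X]
    (A : X →L[ℝ] X) (hacc : ∀ x : X, 0 ≤ ⟪A x, x⟫)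
    (α ρ : ℝ) (hα : 0 < α) (hρ : 0 < ρ)
    (xdag xbar : X) (M : X → (X →L[ℝ] X))
    (c L_M : ℝ) (hc0 : 0 ≤ c) (hc1 : c < 1)
    (hM : ∀ z ∈ Metric.closedBall xdag ρ, ‖M z - ContinuousLinearMap.id ℝ X‖ ≤ c)
    (hMLip : ∀ z ∈ Metric.closedBall xdag ρ, ∀ z' ∈ Metric.closedBall xdag ρ,
      ‖M z - M z'‖ ≤ L_M * ‖z - z'‖)
    (hxbar : ‖xbar - xdag‖ ≤ (1 - c) * ρ)
    (hsmall : c + L_M * ρ < 1) :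
    ∃! z : X, z ∈ Metric.closedBall xdag ρ ∧
      A ((M z) (z - xdag)) + α • (z - xdag) + α • (xdag - xbar) = 0 := by
  classical
  -- the shifted operator S = A + α I
  set S : X →L[ℝ] X := A + α • ContinuousLinearMap.id ℝ X with hSdef
  have hSapp : ∀ x : X, S x = A x + α • x := by
    intro x; simp [hSdef]
  have hlow : ∀ x : X, α * ‖x‖ ≤ ‖S x‖ := by
    intro x; rw [hSapp]; exact aux_low A hacc hα x
  have hAle : ∀ x : X, ‖A x‖ ≤ ‖S x‖ := by
    intro x; rw [hSapp]; exact aux_A_le A hacc hα x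
  -- S is injective
  have hSinj : Function.Injective S := by
    intro u v huv
    have h0 : S (u - v) = 0 := by rw [map_sub, huv, sub_self]
    have := hlow (u - v)
    rw [h0, norm_zero] at this
    have : ‖u - v‖ ≤ 0 := by
      nlinarith
    have : u - v = 0 := by
      have := le_antisymm this (norm_nonneg _)
      exact norm_eq_zero.mp this
    exact sub_eq_zero.mp this
  have hker : LinearMap.ker (S : X →ₗ[ℝ] X) = ⊥ := (LinearMap.ker_eq_bot (f := (S : X →ₗ[ℝ] X))).mpr hSinj
  -- S is antilipschitz, hence has closed range
  have hanti : AntilipschitzWith (α⁻¹).toNNReal S := by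
    apply ContinuousLinearMap.antilipschitz_of_bound
    intro x
    rw [Real.coe_toNNReal _ (inv_nonneg.mpr hα.le)]
    have h := hlow x
    have h2 : α⁻¹ * (α * ‖x‖) ≤ α⁻¹ * ‖S x‖ :=
      mul_le_mul_of_nonneg_left h (inv_nonneg.mpr hα.le)
    rwa [← mul_assoc, inv_mul_cancel₀ hα.ne', one_mul] at h2
  have hclosed : IsClosed (LinearMap.range (S : X →ₗ[ℝ] X) : Set X) :=
    hanti.isClosed_range S.uniformContinuous
  -- S is surjective
  have hrange : LinearMap.range (S : X →ₗ[ℝ] X) = ⊤ := by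
    haveI := hclosed.completeSpace_coe
    rw [← (LinearMap.range (S : X →ₗ[ℝ] X)).orthogonal_orthogonal, Submodule.eq_top_iff']
    intro v
    rw [Submodule.mem_orthogonal]
    intro w hw
    have hSw : ⟪S w, w⟫ = 0 := hw (S w) (LinearMap.mem_range_self _ w)
    have hlb : α * ‖w‖ * ‖w‖ ≤ ⟪S w, w⟫ := by
      rw [hSapp, inner_add_left, real_inner_smul_left, real_inner_self_eq_norm_mul_norm]
      nlinarith [hacc w]
    have hw0 : w = 0 := by
      have h0 : α * ‖w‖ * ‖w‖ ≤ 0 := by rw [hSw] at hlb; exact hlb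
      by_contra hne
      have hp : 0 < ‖w‖ := norm_pos_iff.mpr hne
      nlinarith [mul_pos (mul_pos hα hp) hp]
    rw [hw0, inner_zero_left]
  -- the continuous linear equivalence induced by S
  let E : X ≃L[ℝ] X := ContinuousLinearEquiv.ofBijective S hker hrange
  have hE : ∀ x : X, E x = S x := fun x => rfl
  have hSE : ∀ y : X, S (E.symm y) = y := by
    intro y; rw [← hE]; exact E.apply_symm_apply y
  -- A commutes with E.symm
  have hcomm : ∀ x : X, S (A x) = A (S x) := by
    intro x; rw [hSapp, hSapp, map_add, map_smul]
  have hAcomm : ∀ y : X, E.symm (A y) = A (E.symm y) := by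
    intro y
    apply hSinj
    rw [hSE, hcomm, hSE]
  -- norm bounds for the inverse
  have hTA : ∀ y : X, ‖E.symm (A y)‖ ≤ ‖y‖ := by
    intro y
    rw [hAcomm]
    calc ‖A (E.symm y)‖ ≤ ‖S (E.symm y)‖ := hAle _
      _ = ‖y‖ := by rw [hSE]
  have hT : ∀ y : X, α * ‖E.symm y‖ ≤ ‖y‖ := by
    intro y
    have := hlow (E.symm y)
    rwa [hSE] at this
  -- the fixed point map
  set Φ : X → X := fun z =>
    xdag + E.symm (α • (xbar - xdag) - A ((M z - ContinuousLinearMap.id ℝ X) (z - xdag)))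
    with hΦdef
  -- the equation is equivalent to being a fixed point of Φ
  have hequiv : ∀ z : X,
      (A ((M z) (z - xdag)) + α • (z - xdag) + α • (xdag - xbar) = 0) ↔ Φ z = z := by
    intro z
    set w : X := (M z - ContinuousLinearMap.id ℝ X) (z - xdag) with hw
    have hMz : (M z) (z - xdag) = w + (z - xdag) := by
      simp [hw, ContinuousLinearMap.sub_apply]
    have hLHS : A ((M z) (z - xdag)) + α • (z - xdag) + α • (xdag - xbar)
        = A w + S (z - xdag) - (α • (xbar - xdag) - 0) := by
      rw [hMz, map_add, hSapp]
      module
    constructor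
    · intro h
      have hS' : S (z - xdag) = α • (xbar - xdag) - A w := by
        rw [hLHS, sub_zero, sub_eq_zero] at h
        rw [eq_sub_iff_add_eq, add_comm]
        exact h
      have : z - xdag = E.symm (α • (xbar - xdag) - A w) := by
        rw [← hS', ← hE]
        exact (E.symm_apply_apply _).symm
      rw [hΦdef]
      simp only
      rw [← hw, ← this]
      abel
    · intro h
      have hz : z - xdag = E.symm (α • (xbar - xdag) - A w) := by
        rw [hΦdef] at h
        simp only at h
        rw [← hw] at h
        rw [sub_eq_iff_eq_add']
        exact h.symm
      have hS' : S (z - xdag) = α • (xbar - xdag) - A w := by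
        rw [hz, hSE]
      rw [hLHS, hS', sub_zero]
      abel
  -- Φ maps the closed ball into itself
  have hself : ∀ z ∈ Metric.closedBall xdag ρ, Φ z ∈ Metric.closedBall xdag ρ := by
    intro z hz
    rw [Metric.mem_closedBall, dist_eq_norm] at hz ⊢
    set w : X := (M z - ContinuousLinearMap.id ℝ X) (z - xdag) with hw
    have hwnorm : ‖w‖ ≤ c * ρ := by
      calc ‖w‖ ≤ ‖M z - ContinuousLinearMap.id ℝ X‖ * ‖z - xdag‖ :=
            ContinuousLinearMap.le_opNorm _ _
        _ ≤ c * ρ := by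
            apply mul_le_mul (hM z (by rwa [Metric.mem_closedBall, dist_eq_norm])) hz
              (norm_nonneg _) hc0
    have h1 : ‖Φ z - xdag‖ ≤ ‖E.symm (α • (xbar - xdag))‖ + ‖E.symm (A w)‖ := by
      have : Φ z - xdag = E.symm (α • (xbar - xdag)) - E.symm (A w) := by
        rw [hΦdef]
        simp only
        rw [← hw, ← map_sub]
        abel
      rw [this]
      exact norm_sub_le _ _
    have h2 : ‖E.symm (α • (xbar - xdag))‖ ≤ (1 - c) * ρ := by
      have := hT (α • (xbar - xdag))
      rw [norm_smul, Real.norm_eq_abs, abs_of_pos hα] at this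
      have h3 : ‖E.symm (α • (xbar - xdag))‖ ≤ ‖xbar - xdag‖ := by
        nlinarith [norm_nonneg (E.symm (α • (xbar - xdag)))]
      exact h3.trans hxbar
    have h4 : ‖E.symm (A w)‖ ≤ c * ρ := (hTA w).trans hwnorm
    linarith
  -- contraction constant
  set k : ℝ := c + max L_M 0 * ρ with hk
  have hk0 : 0 ≤ k := by
    have : 0 ≤ max L_M 0 * ρ := mul_nonneg (le_max_right _ _) hρ.le
    linarith
  have hk1 : k < 1 := by
    rcases le_or_gt 0 L_M with hL | hL
    · rw [hk, max_eq_left hL]; exact hsmall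
    · rw [hk, max_eq_right hL.le, zero_mul, add_zero]; exact hc1
  -- the Lipschitz estimate for Φ on the ball
  have hlip : ∀ z ∈ Metric.closedBall xdag ρ, ∀ z' ∈ Metric.closedBall xdag ρ,
      ‖Φ z - Φ z'‖ ≤ k * ‖z - z'‖ := by
    intro z hz z' hz'
    rw [Metric.mem_closedBall, dist_eq_norm] at hz hz'
    set w : X := (M z - ContinuousLinearMap.id ℝ X) (z - xdag) with hwdef
    set w' : X := (M z' - ContinuousLinearMap.id ℝ X) (z' - xdag) with hwdef'
    have hdiff : Φ z - Φ z' = E.symm (A (w' - w)) := by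
      have step1 : Φ z - Φ z'
          = E.symm (α • (xbar - xdag) - A w) - E.symm (α • (xbar - xdag) - A w') := by
        rw [hΦdef]
        simp only
        rw [← hwdef, ← hwdef']
        abel
      rw [step1, ← map_sub]
      congr 1
      rw [map_sub]
      abel
    have hww' : w - w' = (M z - ContinuousLinearMap.id ℝ X) (z - z')
        + (M z - M z') (z' - xdag) := by
      rw [hwdef, hwdef']
      simp only [ContinuousLinearMap.sub_apply, ContinuousLinearMap.id_apply, map_sub]
      abel
    have hb1 : ‖(M z - ContinuousLinearMap.id ℝ X) (z - z')‖ ≤ c * ‖z - z'‖ := by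
      calc ‖(M z - ContinuousLinearMap.id ℝ X) (z - z')‖
          ≤ ‖M z - ContinuousLinearMap.id ℝ X‖ * ‖z - z'‖ := ContinuousLinearMap.le_opNorm _ _
        _ ≤ c * ‖z - z'‖ := by
            apply mul_le_mul_of_nonneg_right
              (hM z (by rwa [Metric.mem_closedBall, dist_eq_norm])) (norm_nonneg _)
    have hb2 : ‖(M z - M z') (z' - xdag)‖ ≤ max L_M 0 * ρ * ‖z - z'‖ := by
      calc ‖(M z - M z') (z' - xdag)‖ ≤ ‖M z - M z'‖ * ‖z' - xdag‖ :=
            ContinuousLinearMap.le_opNorm _ _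
        _ ≤ ‖M z - M z'‖ * ρ := by
            apply mul_le_mul_of_nonneg_left hz' (norm_nonneg _)
        _ ≤ (max L_M 0 * ‖z - z'‖) * ρ := by
            apply mul_le_mul_of_nonneg_right _ hρ.le
            calc ‖M z - M z'‖ ≤ L_M * ‖z - z'‖ :=
                  hMLip z (by rwa [Metric.mem_closedBall, dist_eq_norm])
                    z' (by rwa [Metric.mem_closedBall, dist_eq_norm])
              _ ≤ max L_M 0 * ‖z - z'‖ :=
                  mul_le_mul_of_nonneg_right (le_max_left _ _) (norm_nonneg _)
        _ = max L_M 0 * ρ * ‖z - z'‖ := by ring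
    calc ‖Φ z - Φ z'‖ = ‖E.symm (A (w' - w))‖ := by rw [hdiff]
      _ ≤ ‖w' - w‖ := hTA _
      _ = ‖w - w'‖ := by rw [norm_sub_rev]
      _ ≤ c * ‖z - z'‖ + max L_M 0 * ρ * ‖z - z'‖ := by
          rw [hww']
          exact (norm_add_le _ _).trans (add_le_add hb1 hb2)
      _ = k * ‖z - z'‖ := by rw [hk]; ring
  -- set up Banach's fixed point theorem on the closed ball
  haveI : CompleteSpace (Metric.closedBall xdag ρ) :=
    Metric.isClosed_closedBall.completeSpace_coe
  haveI : Nonempty (Metric.closedBall xdag ρ) :=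
    ⟨⟨xdag, Metric.mem_closedBall_self hρ.le⟩⟩
  set f : Metric.closedBall xdag ρ → Metric.closedBall xdag ρ :=
    fun z => ⟨Φ z, hself z z.2⟩ with hf
  have hflip : LipschitzWith k.toNNReal f := by
    apply LipschitzWith.of_dist_le_mul
    intro z z'
    rw [Subtype.dist_eq, Subtype.dist_eq, dist_eq_norm, dist_eq_norm,
      Real.coe_toNNReal _ hk0]
    exact hlip z z.2 z' z'.2
  have hcontract : ContractingWith k.toNNReal f := by
    constructor
    · rw [← NNReal.coe_lt_one, Real.coe_toNNReal _ hk0]; exact hk1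
    · exact hflip
  set zfix := ContractingWith.fixedPoint f hcontract with hzfixdef
  have hzfix : f zfix = zfix := hcontract.fixedPoint_isFixedPt
  refine ⟨(zfix : X), ⟨zfix.2, ?_⟩, ?_⟩
  · rw [hequiv]
    have : Φ (zfix : X) = ((f zfix : Metric.closedBall xdag ρ) : X) := rfl
    rw [this, hzfix]
  · rintro z' ⟨hz'mem, hz'eq⟩
    rw [hequiv] at hz'eq
    -- two fixed points coincide
    have h1 : ‖z' - (zfix : X)‖ ≤ k * ‖z' - (zfix : X)‖ := by
      have hΦfix : Φ (zfix : X) = (zfix : X) := by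
        have : Φ (zfix : X) = ((f zfix : Metric.closedBall xdag ρ) : X) := rfl
        rw [this, hzfix]
      calc ‖z' - (zfix : X)‖ = ‖Φ z' - Φ (zfix : X)‖ := by rw [hz'eq, hΦfix]
        _ ≤ k * ‖z' - (zfix : X)‖ := hlip z' hz'mem _ zfix.2
    by_contra hne
    have hpos : 0 < ‖z' - (zfix : X)‖ :=
      norm_pos_iff.mpr (sub_ne_zero.mpr (fun h => hne (by rw [h])))
    nlinarith
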